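/- arXiv:2409.13081 — 2 statements merged into one kernel-verified Lean document; each statement's English description precedes it below -/
import Mathlib

section
/- Let V : ℝⁿ → ℝ be continuously differentiable, positive definite with respect to a point, and radially unbounded, and suppose its derivative along solutions of an autonomous ODE satisfies V̇ ≤ 0 everywhere with V̇ = 0 only on a set whose largest invariant subset is the equilibrium. Then the equilibrium is asymptotically stable (LaSalle/Barbashin-Krasovskii invariance principle specialization). -/
open Filter Topology Metric Set

lemma aux_lipschitzOnWith_of_isCompact {E F : Type*} [MetricSpace E] [MetricSpace F]
    {f : E → F} (hf : LocallyLipschitz f) {K : Set E} (hK : IsCompact K) :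
    ∃ L : NNReal, LipschitzOnWith L f K := by
  rcases K.eq_empty_or_nonempty with rfl | hne
  · exact ⟨1, by simp⟩
  -- local data
  have hloc : ∀ p : E, ∃ r : ℝ, 0 < r ∧ ∃ L : NNReal, LipschitzOnWith L f (ball p (2 * r)) := by
    intro p
    obtain ⟨L, t, ht, hL⟩ := hf p
    obtain ⟨ε, hε, hball⟩ := Metric.mem_nhds_iff.1 ht
    exact ⟨ε / 2, by linarith, L, hL.mono (by rw [show 2 * (ε / 2) = ε by ring]; exact hball)⟩
  choose r hr Lf hLf using hloc
  obtain ⟨s, hs⟩ := hK.elim_finite_subcover (fun p : E => ball p (r p))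
    (fun p => isOpen_ball) (fun q hq => mem_iUnion.2 ⟨q, mem_ball_self (hr q)⟩)
  have hsne : s.Nonempty := by
    obtain ⟨q, hq⟩ := hne
    obtain ⟨p, hp, _⟩ := mem_iUnion₂.1 (hs hq)
    exact ⟨p, hp⟩
  -- bound on image
  obtain ⟨C, hC⟩ := Metric.isBounded_iff.1 (hK.image hf.continuous).isBounded
  set d : ℝ := s.inf' hsne r with hd
  have hdpos : 0 < d := by
    rw [hd]
    exact (Finset.lt_inf'_iff hsne).2 fun p _ => hr p
  set L0 : ℝ := s.sup' hsne (fun p => (Lf p : ℝ)) with hL0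
  set L : ℝ := max L0 (max (C / d) 0) with hLdef
  refine ⟨L.toNNReal, lipschitzOnWith_iff_dist_le_mul.2 fun a ha b hb => ?_⟩
  have hLC : C / d ≤ L := le_max_of_le_right (le_max_left _ _)
  have hLnn : 0 ≤ L := le_max_of_le_right (le_max_right _ _)
  rw [Real.coe_toNNReal _ hLnn]
  rcases le_or_gt d (dist a b) with hcase | hcase
  · have h1 : dist (f a) (f b) ≤ C := hC ⟨a, ha, rfl⟩ ⟨b, hb, rfl⟩
    calc dist (f a) (f b) ≤ C := h1
      _ = (C / d) * d := by field_simp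
      _ ≤ (C / d) * dist a b := by
          apply mul_le_mul_of_nonneg_left hcase
          have h0 : (0:ℝ) ≤ dist (f a) (f b) := dist_nonneg
          have : 0 ≤ C := le_trans h0 h1
          positivity
      _ ≤ L * dist a b := mul_le_mul_of_nonneg_right hLC dist_nonneg
  · obtain ⟨p, hp, hap⟩ := mem_iUnion₂.1 (hs ha)
    have hbp : b ∈ ball p (2 * r p) := by
      rw [mem_ball] at *
      have : d ≤ r p := Finset.inf'_le _ hp
      calc dist b p ≤ dist b a + dist a p := dist_triangle _ _ _
        _ < d + r p := by rw [dist_comm b a]; exact add_lt_add hcase hap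
        _ ≤ 2 * r p := by linarith
    have hap' : a ∈ ball p (2 * r p) := by
      rw [mem_ball] at *
      have : 0 < r p := hr p
      linarith
    have := lipschitzOnWith_iff_dist_le_mul.1 (hLf p) a hap' b hbp
    calc dist (f a) (f b) ≤ (Lf p : ℝ) * dist a b := this
      _ ≤ L * dist a b := by
          apply mul_le_mul_of_nonneg_right _ dist_nonneg
          exact le_max_of_le_left (Finset.le_sup' (fun p => (Lf p : ℝ)) hp)


theorem stmt_6 (n : ℕ)
    (f : EuclideanSpace ℝ (Fin n) → EuclideanSpace ℝ (Fin n))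
    (hf : LocallyLipschitz f)
    (xstar : EuclideanSpace ℝ (Fin n)) (hxstar : f xstar = 0)
    (V : EuclideanSpace ℝ (Fin n) → ℝ) (hV : ContDiff ℝ 1 V)
    (hV0 : V xstar = 0) (hVpos : ∀ x, x ≠ xstar → 0 < V x)
    (hVrad : ∀ c : ℝ, ∃ r : ℝ, ∀ x, r < ‖x‖ → c < V x)
    (Vdot : EuclideanSpace ℝ (Fin n) → ℝ)
    (hVdot : ∀ x, Vdot x = inner ℝ (gradient V x) (f x))
    (hVdotle : ∀ x, Vdot x ≤ 0)
    (IsSolution : (ℝ → EuclideanSpace ℝ (Fin n)) → Prop)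
    (hIsSol : ∀ x, IsSolution x ↔ ∀ t, HasDerivAt x (f (x t)) t)
    (Invariant : Set (EuclideanSpace ℝ (Fin n)) → Prop)
    (hInv : ∀ S, Invariant S ↔
      ∀ x : ℝ → EuclideanSpace ℝ (Fin n), IsSolution x → x 0 ∈ S → ∀ t ≥ (0:ℝ), x t ∈ S)
    (hLargest : ∀ S : Set (EuclideanSpace ℝ (Fin n)),
      S ⊆ {x | Vdot x = 0} → Invariant S → S ⊆ {xstar})
    (ℓ : ℝ) (hℓ : 0 < ℓ)
    (hΩcompact : IsCompact {x | V x ≤ ℓ})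
    (hΩinv : Invariant {x | V x ≤ ℓ}) :
    (∀ ε > (0:ℝ), ∃ δ > (0:ℝ), ∀ x : ℝ → EuclideanSpace ℝ (Fin n),
        IsSolution x → ‖x 0 - xstar‖ < δ → ∀ t ≥ (0:ℝ), ‖x t - xstar‖ < ε) ∧
    (∃ δ > (0:ℝ), ∀ x : ℝ → EuclideanSpace ℝ (Fin n),
        IsSolution x → ‖x 0 - xstar‖ < δ → Tendsto x atTop (𝓝 xstar)) := by
  have E_def : True := trivial
  -- basic continuity facts
  have hVc : Continuous V := hV.continuous
  have hfc : Continuous f := hf.continuous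
  have hVnonneg : ∀ p : EuclideanSpace ℝ (Fin n), 0 ≤ V p := by
    intro p
    rcases eq_or_ne p xstar with rfl | hne
    · exact le_of_eq hV0.symm
    · exact (hVpos p hne).le
  -- Vdot in terms of fderiv
  have hVdot' : ∀ p : EuclideanSpace ℝ (Fin n), Vdot p = fderiv ℝ V p (f p) := by
    intro p
    rw [hVdot p]
    exact InnerProductSpace.toDual_symm_apply
  have hVdc : Continuous Vdot := by
    have : Continuous fun p : EuclideanSpace ℝ (Fin n) => fderiv ℝ V p (f p) :=
      (hV.continuous_fderiv one_ne_zero).clm_apply hfc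
    simpa [funext hVdot'] using this
  -- derivative of V along a solution
  have hderiv : ∀ (x : ℝ → EuclideanSpace ℝ (Fin n)), (∀ t, HasDerivAt x (f (x t)) t) →
      ∀ t, HasDerivAt (fun s => V (x s)) (Vdot (x t)) t := by
    intro x hx t
    have hdV : HasFDerivAt V (fderiv ℝ V (x t)) (x t) :=
      ((hV.differentiable one_ne_zero) (x t)).hasFDerivAt
    have := hdV.comp_hasDerivAt t (hx t)
    rw [hVdot' (x t)]
    exact this
  -- V monotone along solutions
  have hmono : ∀ (x : ℝ → EuclideanSpace ℝ (Fin n)), (∀ t, HasDerivAt x (f (x t)) t) →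
      Antitone fun t => V (x t) := by
    intro x hx
    apply antitone_of_deriv_nonpos
    · exact fun t => (hderiv x hx t).differentiableAt
    · intro t
      rw [(hderiv x hx t).deriv]
      exact hVdotle (x t)
  have hxcont : ∀ (x : ℝ → EuclideanSpace ℝ (Fin n)), (∀ t, HasDerivAt x (f (x t)) t) → Continuous x := by
    intro x hx
    exact continuous_iff_continuousAt.2 fun t => (hx t).continuousAt
  -- sublevel sets are compact
  have hsub : ∀ a : ℝ, IsCompact {p : EuclideanSpace ℝ (Fin n) | V p ≤ a} := by
    intro a
    obtain ⟨r, hr⟩ := hVrad a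
    have hbdd : {p : EuclideanSpace ℝ (Fin n) | V p ≤ a} ⊆ closedBall 0 r := by
      intro p hp
      rw [mem_closedBall, dist_zero_right]
      by_contra hcon
      push_neg at hcon
      exact absurd hp (not_le.2 (hr p hcon))
    have hclosed : IsClosed {p : EuclideanSpace ℝ (Fin n) | V p ≤ a} := isClosed_le hVc continuous_const
    exact (isCompact_closedBall (0:EuclideanSpace ℝ (Fin n)) r).of_isClosed_subset hclosed hbdd
  constructor
  · -- stability
    intro ε hε
    rcases subsingleton_or_nontrivial (EuclideanSpace ℝ (Fin n)) with hsing | hnt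
    · refine ⟨1, one_pos, fun x _ _ t _ => ?_⟩
      rw [Subsingleton.elim (x t) xstar]
      simpa using hε
    · obtain ⟨z, hz, hzmin⟩ := (isCompact_sphere xstar ε).exists_isMinOn
        (NormedSpace.sphere_nonempty.mpr hε.le) hVc.continuousOn
      have hzne : z ≠ xstar := by
        intro h
        rw [mem_sphere, h, dist_self] at hz
        exact absurd hz (by positivity)
      have hm : 0 < V z := hVpos z hzne
      have hO : {p | V p < V z} ∈ 𝓝 xstar := by
        apply (isOpen_lt hVc continuous_const).mem_nhds
        simpa [hV0] using hm
      obtain ⟨δ₀, hδ₀, hball⟩ := Metric.mem_nhds_iff.1 hO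
      refine ⟨min δ₀ ε, lt_min hδ₀ hε, fun x hsol hx0 t ht => ?_⟩
      rw [hIsSol] at hsol
      by_contra hcon
      push_neg at hcon
      have hg : ContinuousOn (fun s => dist (x s) xstar) (Icc 0 t) :=
        ((hxcont x hsol).dist continuous_const).continuousOn
      have h0 : dist (x 0) xstar < ε := by
        rw [dist_eq_norm]; exact lt_of_lt_of_le hx0 (min_le_right _ _)
      have hmem : ε ∈ Icc (dist (x 0) xstar) (dist (x t) xstar) :=
        ⟨h0.le, by rw [dist_eq_norm]; exact hcon⟩
      obtain ⟨s, hs, hxs⟩ := intermediate_value_Icc ht hg hmem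
      have h1 : V z ≤ V (x s) := hzmin hxs
      have h2 : V (x s) ≤ V (x 0) := hmono x hsol hs.1
      have h3 : V (x 0) < V z := hball
        (by rw [mem_ball, dist_eq_norm]; exact lt_of_lt_of_le hx0 (min_le_left _ _))
      linarith
  · -- attraction
    refine ⟨1, one_pos, fun x hsol hx0 => ?_⟩
    rw [hIsSol] at hsol
    have hxc := hxcont x hsol
    set K := {p : EuclideanSpace ℝ (Fin n) | V p ≤ V (x 0)} with hKdef
    have hKcomp : IsCompact K := hsub (V (x 0))
    have hxK : ∀ t, 0 ≤ t → x t ∈ K := fun t ht => hmono x hsol ht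
    have hbddb : BddBelow (Set.range fun t => V (x t)) := by
      refine ⟨0, ?_⟩
      rintro v ⟨t, rfl⟩
      exact hVnonneg (x t)
    set c := ⨅ t : ℝ, V (x t) with hc
    have hVt : Tendsto (fun t => V (x t)) atTop (𝓝 c) := tendsto_atTop_ciInf (hmono x hsol) hbddb
    have hcle : ∀ t, c ≤ V (x t) := fun t => ciInf_le hbddb t
    set ω := {p : EuclideanSpace ℝ (Fin n) | ∃ u : ℕ → ℝ,
      Tendsto u atTop atTop ∧ Tendsto (fun k => x (u k)) atTop (𝓝 p)} with hω
    have hωV : ∀ p ∈ ω, V p = c := by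
      rintro p ⟨u, hu, hconv⟩
      exact tendsto_nhds_unique ((hVc.tendsto p).comp hconv) (hVt.comp hu)
    -- Vdot vanishes on ω
    have hωdot : ∀ p ∈ ω, Vdot p = 0 := by
      rintro p ⟨u, hu, hconv⟩
      by_contra hne
      have hlt : Vdot p < 0 := lt_of_le_of_ne (hVdotle p) hne
      set η := -Vdot p / 2 with hη
      have hηpos : 0 < η := by rw [hη]; linarith
      have hUmem : {q | Vdot q < -η} ∈ 𝓝 p :=
        (isOpen_lt hVdc continuous_const).mem_nhds (by simp only [mem_setOf_eq]; rw [hη]; linarith)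
      obtain ⟨r, hrpos, hrsub⟩ := Metric.nhds_basis_closedBall.mem_iff.1 hUmem
      obtain ⟨M, hM⟩ := hKcomp.exists_bound_of_continuousOn hfc.continuousOn
      set M' := max M 1 with hM'
      have hM'pos : (0:ℝ) < M' := lt_of_lt_of_le one_pos (le_max_right _ _)
      set τ := r / (2 * M') with hτ
      have hτpos : 0 < τ := by positivity
      have hev : ∀ᶠ k in atTop, 0 ≤ u k ∧ dist (x (u k)) p < r / 2 ∧ V (x (u k)) < c + η * τ := by
        filter_upwards [hu.eventually_ge_atTop 0,
          hconv (Metric.ball_mem_nhds p (by positivity : (0:ℝ) < r / 2)),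
          (hVt.comp hu).eventually_lt_const (lt_add_of_pos_right c (mul_pos hηpos hτpos))] with k h1 h2 h3
        exact ⟨h1, h2, by simpa using h3⟩
      obtain ⟨k, hk1, hk2, hk3⟩ := hev.exists
      have hstay : ∀ s ∈ Icc (u k) (u k + τ), x s ∈ Metric.closedBall p r := by
        intro s hsI
        have hspeed : ‖x s - x (u k)‖ ≤ M' * ‖s - u k‖ := by
          apply (convex_Icc (u k) (u k + τ)).norm_image_sub_le_of_norm_hasDerivWithin_le
            (f' := fun w => f (x w)) (fun w _ => (hsol w).hasDerivWithinAt) ?_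
            (left_mem_Icc.2 (by linarith [hτpos.le])) hsI
          intro w hw
          have hw0 : (0:ℝ) ≤ w := le_trans hk1 hw.1
          exact le_trans (hM (x w) (hxK w hw0)) (le_max_left _ _)
        have hns : ‖s - u k‖ ≤ τ := by
          rw [Real.norm_eq_abs, abs_of_nonneg (by linarith [hsI.1])]
          linarith [hsI.2]
        have hMτ : M' * τ = r / 2 := by
          rw [hτ]; field_simp
        rw [Metric.mem_closedBall]
        calc dist (x s) p ≤ dist (x s) (x (u k)) + dist (x (u k)) p := dist_triangle _ _ _
          _ ≤ M' * τ + r / 2 := by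
              refine add_le_add (le_trans ?_ (by nlinarith [hns, hM'pos] : M' * ‖s - u k‖ ≤ M' * τ)) hk2.le
              rw [dist_eq_norm]; exact hspeed
          _ = r := by rw [hMτ]; ring
      have hanti : AntitoneOn (fun s => V (x s) + η * s) (Icc (u k) (u k + τ)) := by
        have hD : ∀ w : ℝ, HasDerivAt (fun s => V (x s) + η * s) (Vdot (x w) + η) w := by
          intro w
          have h2 : HasDerivAt (fun s : ℝ => η * s) η w := by
            simpa using (hasDerivAt_id w).const_mul η
          exact (hderiv x hsol w).add h2
        apply antitoneOn_of_deriv_nonpos (convex_Icc _ _)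
        · exact ((hVc.comp hxc).add (continuous_const.mul continuous_id)).continuousOn
        · intro w _
          exact (hD w).differentiableAt.differentiableWithinAt
        · intro w hw
          have hwI : w ∈ Icc (u k) (u k + τ) := interior_subset hw
          have hwb : Vdot (x w) < -η := hrsub (hstay w hwI)
          rw [(hD w).deriv]
          linarith
      have hdrop := hanti (left_mem_Icc.2 (by linarith [hτpos.le]))
        (right_mem_Icc.2 (by linarith [hτpos.le])) (by linarith [hτpos.le])
      simp only at hdrop
      have hcontr : V (x (u k + τ)) < c := by nlinarith [hdrop, hk3, hηpos, hτpos]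
      exact absurd (hcle (u k + τ)) (not_le.2 hcontr)
    -- ω is invariant
    have hωinv : Invariant ω := by
      rw [hInv]
      intro y hysol hy0 t ht
      rw [hIsSol] at hysol
      obtain ⟨u, hu, hconv⟩ := hy0
      obtain ⟨L, hL⟩ := aux_lipschitzOnWith_of_isCompact hf hKcomp
      have hyK : ∀ s, 0 ≤ s → y s ∈ K := by
        intro s hs0
        have h1 : V (y s) ≤ V (y 0) := hmono y hysol hs0
        have h2 : V (y 0) = c := hωV _ ⟨u, hu, hconv⟩
        have h3 : c ≤ V (x 0) := hcle 0
        simp only [hKdef, mem_setOf_eq]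
        linarith
      have hbound : ∀ᶠ k in atTop,
          dist (x (u k + t)) (y t) ≤ dist (x (u k)) (y 0) * Real.exp (L * t) := by
        filter_upwards [hu.eventually_ge_atTop 0] with k hk
        have hzder : ∀ s : ℝ, HasDerivAt (fun w => x (u k + w)) (f (x (u k + s))) s := by
          intro s
          have h2 : HasDerivAt (fun w : ℝ => u k + w) 1 s := (hasDerivAt_id s).const_add (u k)
          have h3 := (hsol (u k + s)).scomp s h2; rw [one_smul] at h3; exact h3
        have hzc : Continuous fun w => x (u k + w) :=
          continuous_iff_continuousAt.2 fun s => (hzder s).continuousAt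
        have happ := dist_le_of_trajectories_ODE_of_mem (v := fun _ => f)
          (s := fun _ => K) (K := L) (fun _ _ => hL)
          (hzc.continuousOn)
          (fun s _ => (hzder s).hasDerivWithinAt)
          (fun s hs => hxK (u k + s) (by linarith [hs.1]))
          ((hxcont y hysol).continuousOn)
          (fun s _ => (hysol s).hasDerivWithinAt)
          (fun s hs => hyK s hs.1)
          (le_refl (dist (x (u k + 0)) (y 0)))
          t ⟨ht, le_rfl⟩
        simpa using happ
      have hdist0 : Tendsto (fun k => dist (x (u k)) (y 0) * Real.exp (L * t)) atTop (𝓝 0) := by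
        have h1 : Tendsto (fun k => dist (x (u k)) (y 0)) atTop (𝓝 0) :=
          tendsto_iff_dist_tendsto_zero.1 hconv
        simpa using h1.mul_const (Real.exp (L * t))
      have hxconv : Tendsto (fun k => x (u k + t)) atTop (𝓝 (y t)) := by
        rw [tendsto_iff_dist_tendsto_zero]
        exact squeeze_zero' (Eventually.of_forall fun k => dist_nonneg) hbound hdist0
      exact ⟨fun k => u k + t, tendsto_atTop_add_const_right _ t hu, hxconv⟩
    -- ω is nonempty and contained in {xstar}
    have hωsub : ω ⊆ {xstar} := hLargest ω (fun q hq => hωdot q hq) hωinv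
    have hωne : ∃ p, p ∈ ω := by
      have hxnK : ∀ m : ℕ, x (m : ℝ) ∈ K := fun m => hxK m (Nat.cast_nonneg m)
      obtain ⟨p, _, φ, hφ, hφconv⟩ := hKcomp.tendsto_subseq hxnK
      exact ⟨p, fun k => ((φ k : ℕ) : ℝ), tendsto_natCast_atTop_atTop.comp hφ.tendsto_atTop, hφconv⟩
    obtain ⟨p, hp⟩ := hωne
    have hc0 : c = 0 := by
      have hpx : p = xstar := hωsub hp
      have hVp : V p = c := hωV p hp
      rw [hpx, hV0] at hVp
      exact hVp.symm
    -- conclude convergence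
    rw [Metric.tendsto_atTop]
    intro ε hε
    by_cases hA : (K ∩ {q | ε ≤ dist q xstar}).Nonempty
    · have hAcomp : IsCompact (K ∩ {q | ε ≤ dist q xstar}) :=
        hKcomp.inter_right (isClosed_le continuous_const (continuous_id.dist continuous_const))
      obtain ⟨z, hzA, hzmin⟩ := hAcomp.exists_isMinOn hA hVc.continuousOn
      have hzpos : 0 < V z := by
        apply hVpos z
        intro h
        have := hzA.2
        rw [h] at this
        simp only [mem_setOf_eq, dist_self] at this
        linarith
      have hev : ∀ᶠ t in atTop, V (x t) < V z := hVt.eventually_lt_const (by rw [hc0]; exact hzpos)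
      obtain ⟨N, hN⟩ := eventually_atTop.1 hev
      refine ⟨max N 0, fun t ht => ?_⟩
      have ht0 : (0:ℝ) ≤ t := le_trans (le_max_right _ _) ht
      by_contra hcon
      push_neg at hcon
      exact absurd (hzmin ⟨hxK t ht0, hcon⟩) (not_le.2 (hN t (le_trans (le_max_left _ _) ht)))
    · refine ⟨0, fun t ht => ?_⟩
      by_contra hcon
      push_neg at hcon
      exact hA ⟨x t, hxK t ht, hcon⟩
end

section
/- Given the update law dp̂₁/dt = γ₁σ(θ₁)e₂ᵀ(e₁ + f₂ + k₁x₂) and the error dynamics ė₂ = e₁·0 + (f₂ + g₂θ₁ + k₁x₂), with virtual control ξ₃ = -p̂₁(e₁ + f₂ + k₁x₂) - k₂σ(θ₁)e₂ and e₃ = g₂ - ξ₃, the derivative of V₂ = V₁ + (1/2)e₂ᵀe₂ + (1/2)γ₁⁻¹|θ₁|(p̂₁ - p₁)² satisfies V̇₂ = -k₁e₁ᵀe₁ - k₂|θ₁|e₂ᵀe₂ + θ₁e₃ᵀe₂, where p₁ = θ₁⁻¹. -/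
open Matrix

theorem stmt_8 (θ₁ k₁ k₂ γ₁ : ℝ) (hθ₁ : θ₁ ≠ 0) (hk₁ : 0 < k₁) (hk₂ : 0 < k₂) (hγ₁ : 0 < γ₁)
    (p₁ σ : ℝ) (hp₁ : p₁ = θ₁⁻¹) (hσ : σ = θ₁ / |θ₁|)
    (f₂ : Fin 2 → ℝ)
    (e₁ e₂ x₂ g₂ : ℝ → (Fin 2 → ℝ)) (phat₁ : ℝ → ℝ) (V₁ : ℝ → ℝ)
    (hdphat₁ : ∀ t, HasDerivAt phat₁ (γ₁ * σ * (e₂ t ⬝ᵥ (e₁ t + f₂ + k₁ • x₂ t))) t)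
    (hde₂ : ∀ t, HasDerivAt e₂ (f₂ + θ₁ • g₂ t + k₁ • x₂ t) t)
    (hdV₁ : ∀ t, HasDerivAt V₁ (-k₁ * (e₁ t ⬝ᵥ e₁ t) + (e₂ t ⬝ᵥ e₁ t)) t)
    (ξ₃ : ℝ → (Fin 2 → ℝ))
    (hξ₃ : ∀ t, ξ₃ t = -(phat₁ t • (e₁ t + f₂ + k₁ • x₂ t)) - (k₂ * σ) • e₂ t)
    (e₃ : ℝ → (Fin 2 → ℝ)) (he₃ : ∀ t, e₃ t = g₂ t - ξ₃ t)
    (V₂ : ℝ → ℝ)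
    (hV₂ : ∀ t, V₂ t = V₁ t + (1/2) * (e₂ t ⬝ᵥ e₂ t) + (1/2) * γ₁⁻¹ * |θ₁| * (phat₁ t - p₁)^2) :
    ∀ t, HasDerivAt V₂
      (-k₁ * (e₁ t ⬝ᵥ e₁ t) - k₂ * |θ₁| * (e₂ t ⬝ᵥ e₂ t) + θ₁ * (e₃ t ⬝ᵥ e₂ t)) t := by
  intro t
  have habs : |θ₁| ≠ 0 := abs_ne_zero.mpr hθ₁
  have h0 : HasDerivAt (fun s => e₂ s 0) ((f₂ + θ₁ • g₂ t + k₁ • x₂ t) 0) t :=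
    hasDerivAt_pi.mp (hde₂ t) 0
  have h1 : HasDerivAt (fun s => e₂ s 1) ((f₂ + θ₁ • g₂ t + k₁ • x₂ t) 1) t :=
    hasDerivAt_pi.mp (hde₂ t) 1
  have key := ((hdV₁ t).add (((h0.mul h0).add (h1.mul h1)).const_mul ((1:ℝ)/2))).add
      ((((hdphat₁ t).sub_const p₁).pow 2).const_mul ((1/2) * γ₁⁻¹ * |θ₁|))
  have hfun : V₂ = fun s => V₁ s + (1/2) * (e₂ s 0 * e₂ s 0 + e₂ s 1 * e₂ s 1)
      + (1/2) * γ₁⁻¹ * |θ₁| * (phat₁ s - p₁)^2 := by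
    funext s
    rw [hV₂ s]
    simp [dotProduct, Fin.sum_univ_two]
  rw [hfun]
  refine key.congr_deriv (Eq.symm ?_)
  have hs1 : σ * |θ₁| = θ₁ := by rw [hσ]; field_simp
  have hs2 : σ * θ₁ = |θ₁| := by
    have h := abs_mul_abs_self θ₁
    rw [hσ]; field_simp; rw [sq_abs]
  have hpθ : p₁ * θ₁ = 1 := by rw [hp₁]; field_simp
  set A := e₂ t 0 * (e₁ t 0 + f₂ 0 + k₁ * x₂ t 0) + e₂ t 1 * (e₁ t 1 + f₂ 1 + k₁ * x₂ t 1) with hA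
  simp only [hξ₃, he₃, dotProduct, Fin.sum_univ_two, Pi.add_apply, Pi.sub_apply,
    Pi.smul_apply, Pi.neg_apply, smul_eq_mul, pow_one, Nat.cast_ofNat]
  have hγ : γ₁⁻¹ * γ₁ = 1 := inv_mul_cancel₀ (ne_of_gt hγ₁)
  linear_combination (k₂ * (e₂ t 0 * e₂ t 0 + e₂ t 1 * e₂ t 1)) * hs2
    - ((phat₁ t - p₁) * A) * hs1 + A * hpθ
    - (|θ₁| * ((phat₁ t - p₁) * (σ * A))) * hγ
end
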